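/- arXiv:1102.3079 — 7 statements merged into one kernel-verified Lean document; each statement's English description precedes it below -/
import Mathlib

section
/- For every x ∈ [l, l+1), the series ∑_{i=1}^∞ x_i / (-β)^i converges to x, where x_i = ⌊-β T^{i-1}(x) - l⌋. -/
/-- The `(-β,l)`-transformation. -/
noncomputable def negBetaT (β l x : ℝ) : ℝ := -β * x - ⌊-β * x - l⌋

/-- The `i`-th digit (0-indexed: `negBetaDigit β l x i` is the digit `x_{i+1}`). -/
noncomputable def negBetaDigit (β l x : ℝ) (i : ℕ) : ℤ :=
  ⌊-β * ((negBetaT β l)^[i] x) - l⌋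

lemma negBetaT_mem (β l y : ℝ) : negBetaT β l y ∈ Set.Ico l (l + 1) := by
  have h1 : (⌊-β * y - l⌋ : ℝ) ≤ -β * y - l := Int.floor_le _
  have h2 : -β * y - l - 1 < ⌊-β * y - l⌋ := Int.sub_one_lt_floor _
  rw [Set.mem_Ico]
  unfold negBetaT
  constructor <;> linarith

lemma negBeta_iter_mem (β l x : ℝ) (hx : x ∈ Set.Ico l (l + 1)) (n : ℕ) :
    (negBetaT β l)^[n] x ∈ Set.Ico l (l + 1) := by
  cases n with
  | zero => simpa using hx
  | succ n => rw [Function.iterate_succ_apply']; exact negBetaT_mem _ _ _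

lemma negBeta_partial (β l : ℝ) (hβ : 1 < β) (x : ℝ) (n : ℕ) :
    x = (∑ i ∈ Finset.range n, (negBetaDigit β l x i : ℝ) / (-β) ^ (i + 1))
        + ((negBetaT β l)^[n] x) / (-β) ^ n := by
  have hb : (-β) ≠ 0 := by intro h; nlinarith
  induction n with
  | zero => simp
  | succ n ih =>
    rw [Finset.sum_range_succ, Function.iterate_succ_apply']
    have hT : (negBetaT β l) ((negBetaT β l)^[n] x)
        = -β * ((negBetaT β l)^[n] x) - (negBetaDigit β l x n) := rfl
    rw [hT]
    have hpn : ((-β) ^ n) ≠ 0 := pow_ne_zero _ hb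
    conv_lhs => rw [ih]
    have key : ((negBetaT β l)^[n] x) / (-β) ^ n
        = (negBetaDigit β l x n : ℝ) / (-β) ^ (n + 1)
          + (-β * ((negBetaT β l)^[n] x) - (negBetaDigit β l x n : ℝ)) / (-β) ^ (n + 1) := by
      field_simp
      ring
    rw [key]
    ring

theorem stmt_1 (β l : ℝ) (hβ : 1 < β) (hl₁ : -1 < l) (hl₂ : l ≤ 0)
    (x : ℝ) (hx : x ∈ Set.Ico l (l + 1)) :
    HasSum (fun i : ℕ => (negBetaDigit β l x i : ℝ) / (-β) ^ (i + 1)) x := by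
  set f : ℕ → ℝ := fun i => (negBetaDigit β l x i : ℝ) / (-β) ^ (i + 1) with hf
  have hβ0 : (0:ℝ) < β := by linarith
  have hinv : |(1:ℝ)/β| < 1 := by
    rw [abs_of_pos (by positivity)]
    rw [div_lt_one hβ0]; linarith
  -- bound on iterates
  have hiter : ∀ n, |(negBetaT β l)^[n] x| ≤ 1 := by
    intro n
    obtain ⟨h1, h2⟩ := negBeta_iter_mem β l x hx n
    rw [abs_le]; constructor <;> linarith
  -- digit bound
  have hdig : ∀ i, |(negBetaDigit β l x i : ℝ)| ≤ β + 2 := by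
    intro i
    set y := (negBetaT β l)^[i] x
    have hy := hiter i
    have hz : |(-β * y - l)| ≤ β + 1 := by
      have : |(-β * y - l)| ≤ |(-β) * y| + |l| := abs_sub _ _
      have h2 : |(-β) * y| = β * |y| := by rw [abs_mul, abs_neg, abs_of_pos hβ0]
      have h3 : |l| ≤ 1 := by rw [abs_le]; constructor <;> linarith
      nlinarith
    have h1 : (negBetaDigit β l x i : ℝ) ≤ -β * y - l := Int.floor_le _
    have h2 : -β * y - l - 1 < (negBetaDigit β l x i : ℝ) := Int.sub_one_lt_floor _
    rw [abs_le] at hz ⊢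
    constructor <;> linarith
  -- summability
  have hsum : Summable f := by
    apply Summable.of_norm_bounded (g := fun i => (β + 2) * (1/β) ^ i)
      ((summable_geometric_of_lt_one (by positivity) (by rw [div_lt_one hβ0]; linarith)).mul_left _)
    intro i
    have hbp : (0:ℝ) < β ^ (i+1) := by positivity
    have h1 : ‖f i‖ = |(negBetaDigit β l x i : ℝ)| / β ^ (i+1) := by
      rw [hf]; simp only [norm_div, Real.norm_eq_abs, abs_pow, abs_neg,
        abs_of_pos hβ0]
    rw [h1]
    have h2 : (β + 2) * (1/β) ^ i = (β + 2) / β ^ i := by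
      rw [div_pow, one_pow]; ring
    rw [h2]
    have h3 : β ^ i ≤ β ^ (i+1) := pow_le_pow_right₀ (by linarith) (by omega)
    have h4 : (0:ℝ) < β ^ i := by positivity
    calc |(negBetaDigit β l x i : ℝ)| / β ^ (i+1)
        ≤ (β + 2) / β ^ (i+1) := by gcongr; exact hdig i
      _ ≤ (β + 2) / β ^ i := by gcongr
  -- partial sums tend to x
  have htend : Filter.Tendsto (fun n => ∑ i ∈ Finset.range n, f i) Filter.atTop (nhds x) := by
    have hrem : Filter.Tendsto (fun n => ((negBetaT β l)^[n] x) / (-β) ^ n)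
        Filter.atTop (nhds 0) := by
      have hg : Filter.Tendsto (fun n : ℕ => (1/β) ^ n) Filter.atTop (nhds 0) :=
        tendsto_pow_atTop_nhds_zero_of_lt_one (by positivity)
          (by rw [div_lt_one hβ0]; linarith)
      refine squeeze_zero_norm (fun n => ?_) hg
      have hbp : (0:ℝ) < β ^ n := by positivity
      have hn : ‖((negBetaT β l)^[n] x) / (-β) ^ n‖
          = |(negBetaT β l)^[n] x| / β ^ n := by
        simp only [norm_div, Real.norm_eq_abs, abs_pow, abs_neg, abs_of_pos hβ0]
      rw [hn, div_pow, one_pow]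
      gcongr
      exact hiter n
    have heq : ∀ n, ∑ i ∈ Finset.range n, f i
        = x - ((negBetaT β l)^[n] x) / (-β) ^ n := by
      intro n
      have := negBeta_partial β l hβ x n
      linarith [this]
    simp only [heq]
    have := Filter.Tendsto.sub (tendsto_const_nhds (x := x)) hrem
    simpa using this
  have htend2 := hsum.hasSum.tendsto_sum_nat
  have : ∑' i, f i = x := tendsto_nhds_unique htend2 htend
  exact this ▸ hsum.hasSum
end

section
/- The implication (x ∈ [l, l+1) ⟹ x/(-β) ∈ [l, l+1)) holds for all x if and only if -β/(β+1) < l ≤ -1/(β+1). -/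
theorem stmt_5 (β l : ℝ) (hβ : 1 < β) (hl₁ : -1 < l) (hl₂ : l ≤ 0) :
    (∀ x : ℝ, x ∈ Set.Ico l (l + 1) → x / (-β) ∈ Set.Ico l (l + 1)) ↔
      (-β / (β + 1) < l ∧ l ≤ -1 / (β + 1)) := by
  have hβ0 : (0:ℝ) < β := by linarith
  have hβ1 : (0:ℝ) < β + 1 := by linarith
  constructor
  · intro h
    constructor
    · have := h l ⟨le_refl _, by linarith⟩
      obtain ⟨h1, h2⟩ := this
      -- l / (-β) < l + 1
      rw [div_neg, ← neg_div, div_lt_iff₀ hβ0] at h2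
      rw [div_lt_iff₀ hβ1]
      nlinarith
    · by_contra hc
      push_neg at hc
      rw [div_lt_iff₀ hβ1] at hc
      -- l+1 > -lβ ; pick x = (-lβ + (l+1))/2
      set x := (-l * β + (l + 1)) / 2 with hx
      have hx1 : l ≤ x := by nlinarith
      have hx2 : x < l + 1 := by nlinarith
      have := h x ⟨hx1, hx2⟩
      obtain ⟨h1, _⟩ := this
      rw [div_neg, le_neg, div_le_iff₀ hβ0] at h1
      nlinarith
  · rintro ⟨h1, h2⟩ x ⟨hx1, hx2⟩
    rw [div_lt_iff₀ hβ1] at h1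
    rw [le_div_iff₀ hβ1] at h2
    constructor
    · rw [div_neg, le_neg, div_le_iff₀ hβ0]
      nlinarith
    · rw [div_neg, neg_lt, lt_div_iff₀ hβ0] at *
      nlinarith
end

section
/- In the Ito-Sadahiro system (l = -β/(β+1)), the set {x ∈ [l, l+1) : T^n(x) = 0 for some n} contains a nonzero element if and only if β ≥ (1+√5)/2. -/
theorem stmt_9 (β : ℝ) (hβ : 1 < β) (l : ℝ) (hl : l = -β / (β + 1)) :
    (∃ x ∈ Set.Ico l (l + 1), x ≠ 0 ∧ ∃ n : ℕ, (negBetaT β l)^[n] x = 0) ↔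
      (1 + Real.sqrt 5) / 2 ≤ β := by
  have hβ0 : (0:ℝ) < β := by linarith
  have hβ1 : (0:ℝ) < β + 1 := by linarith
  have hs : Real.sqrt 5 ^ 2 = 5 := Real.sq_sqrt (by norm_num)
  have hs0 : 0 ≤ Real.sqrt 5 := Real.sqrt_nonneg 5
  have hgold : (1 + Real.sqrt 5) / 2 ≤ β ↔ β + 1 ≤ β ^ 2 := by
    constructor
    · intro h; nlinarith
    · intro h; nlinarith [sq_nonneg (2*β - 1 - Real.sqrt 5)]
  have hTmem : ∀ x : ℝ, negBetaT β l x ∈ Set.Ico l (l + 1) := by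
    intro x
    unfold negBetaT
    constructor
    · have := Int.floor_le (-β * x - l); linarith
    · have := Int.lt_floor_add_one (-β * x - l); push_cast at this ⊢; linarith
  have hkey : ∀ y ∈ Set.Ico l (l + 1), y ≠ 0 → negBetaT β l y = 0 → β + 1 ≤ β ^ 2 := by
    intro y hy hy0 hT
    obtain ⟨hy1, hy2⟩ := hy
    rw [hl, div_le_iff₀ hβ1] at hy1
    have hsum : -β / (β + 1) + 1 = 1 / (β + 1) := by field_simp; ring
    rw [hl, hsum, lt_div_iff₀ hβ1] at hy2
    unfold negBetaT at hT
    set k : ℤ := ⌊-β * y - l⌋ with hk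
    have hyk : β * y = -(k:ℝ) := by linarith
    have hk0 : k ≠ 0 := by
      intro h
      apply hy0
      rw [h] at hyk
      push_cast at hyk
      have h0 : β * y = 0 := by linarith
      rcases mul_eq_zero.mp h0 with h' | h'
      · exact absurd h' (ne_of_gt hβ0)
      · exact h'
    rcases lt_or_gt_of_ne hk0 with hneg | hpos
    · exfalso
      have hk1' : k ≤ -1 := by omega
      have hk1 : (k:ℝ) ≤ -1 := by exact_mod_cast hk1'
      -- β * y ≥ 1, y * (β + 1) < 1
      nlinarith [mul_lt_mul_of_pos_left hy2 hβ0]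
    · have hk1 : (1:ℝ) ≤ (k:ℝ) := by exact_mod_cast hpos
      -- -β ≤ y * (β+1), β * y ≤ -1
      nlinarith [mul_le_mul_of_nonneg_left hy1 hβ0.le]
  constructor
  · rintro ⟨x, hx, hx0, n, hn⟩
    rw [hgold]
    clear hgold
    induction n generalizing x with
    | zero => simp at hn; exact absurd hn hx0
    | succ n ih =>
      rw [Function.iterate_succ_apply] at hn
      by_cases h : negBetaT β l x = 0
      · exact hkey x hx hx0 h
      · exact ih (negBetaT β l x) (hTmem x) h hn
  · intro h
    rw [hgold] at h
    have hxneg : -1 / β < 0 := by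
      apply div_neg_of_neg_of_pos _ hβ0; norm_num
    refine ⟨-1 / β, ⟨?_, ?_⟩, ne_of_lt hxneg, 1, ?_⟩
    · rw [hl, div_le_div_iff₀ hβ1 hβ0]
      nlinarith
    · have hsum : l + 1 = 1 / (β + 1) := by rw [hl]; field_simp; ring
      rw [hsum]
      calc -1 / β < 0 := hxneg
        _ < 1 / (β + 1) := by positivity
    · simp only [Function.iterate_one]
      unfold negBetaT
      have h1 : -β * (-1 / β) = 1 := by field_simp
      rw [h1]
      have hl0 : l < 0 := by
        rw [hl]; exact div_neg_of_neg_of_pos (by linarith) hβ1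
      have hl1 : -1 < l := by
        rw [hl, neg_div, neg_lt_neg_iff]
        exact (div_lt_one hβ1).mpr (by linarith)
      have hfl : ⌊(1:ℝ) - l⌋ = 1 := by
        rw [Int.floor_eq_iff]
        push_cast
        constructor <;> linarith
      rw [hfl]
      norm_num
end

section
/- An integer sequence (x_i)_{i≥1} is the (-β,l)-expansion of some x ∈ [l, l+1) if and only if for every i ≥ 1, d(l) ⪯_alt (x_i, x_{i+1}, ...) ≺_alt d*(r), where d(l) is the (-β,l)-expansion of l and d*(r) = lim_{ε→0+} d(l+1-ε) in the product topology. -/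
def AltLt (u v : ℕ → ℤ) : Prop :=
  ∃ m : ℕ, (∀ k < m, u k = v k) ∧ (-1 : ℤ) ^ (m + 1) * (v m - u m) > 0

def AltLe (u v : ℕ → ℤ) : Prop := AltLt u v ∨ u = v

namespace NBaux

noncomputable def val (β : ℝ) (w : ℕ → ℤ) : ℝ := ∑' j, (w j : ℝ) * (-β⁻¹) ^ (j + 1)

variable {β l : ℝ}

/- ## basic facts -/

lemma qabs (hβ : 1 < β) : |(-β⁻¹)| = β⁻¹ := by
  rw [abs_neg, abs_inv, abs_of_pos (by linarith)]

lemma qlt (hβ : 1 < β) : β⁻¹ < 1 := by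
  rw [inv_lt_one_iff₀]; right; exact hβ

lemma qpos (hβ : 1 < β) : 0 < β⁻¹ := by
  have : (0:ℝ) < β := by linarith
  positivity

lemma T_mem (x : ℝ) : negBetaT β l x ∈ Set.Ico l (l + 1) := by
  unfold negBetaT
  constructor
  · have := Int.floor_le (-β * x - l)
    linarith
  · have := Int.lt_floor_add_one (-β * x - l)
    push_cast at this ⊢
    linarith

lemma T_iter_mem {x : ℝ} (hx : x ∈ Set.Ico l (l + 1)) (i : ℕ) :
    (negBetaT β l)^[i] x ∈ Set.Ico l (l + 1) := by
  cases i with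
  | zero => simpa
  | succ n =>
    rw [Function.iterate_succ_apply']
    exact T_mem _

lemma digit_abs_le (hβ : 1 < β) (hl₁ : -1 < l) (hl₂ : l ≤ 0) {x : ℝ}
    (hx : x ∈ Set.Ico l (l + 1)) (i : ℕ) :
    |(negBetaDigit β l x i : ℝ)| ≤ 2 * β + 2 := by
  have hy := T_iter_mem (β := β) hx i
  obtain ⟨h1, h2⟩ := hy
  set y := (negBetaT β l)^[i] x with hy
  have hz1 : -β * y - l ≤ β + 1 := by nlinarith
  have hz2 : -(β + 1) ≤ -β * y - l := by nlinarith
  have hf1 : (⌊-β * y - l⌋ : ℝ) ≤ -β * y - l := Int.floor_le _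
  have hf2 : -β * y - l < ⌊-β * y - l⌋ + 1 := Int.lt_floor_add_one _
  rw [abs_le]
  unfold negBetaDigit
  constructor <;> nlinarith

lemma digit_shift (x : ℝ) (i k : ℕ) :
    negBetaDigit β l x (i + k) = negBetaDigit β l ((negBetaT β l)^[i] x) k := by
  unfold negBetaDigit
  rw [add_comm, Function.iterate_add_apply]

lemma T_iter_succ (x : ℝ) (n : ℕ) :
    (negBetaT β l)^[n + 1] x = -β * ((negBetaT β l)^[n] x) - (negBetaDigit β l x n : ℝ) := by
  rw [Function.iterate_succ_apply']
  rfl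

/- ## val machinery -/

lemma val_summable (hβ : 1 < β) {w : ℕ → ℤ} {B : ℝ} (hw : ∀ j, |(w j : ℝ)| ≤ B) :
    Summable (fun j => (w j : ℝ) * (-β⁻¹) ^ (j + 1)) := by
  apply Summable.of_norm_bounded (g := fun j => B * β⁻¹ ^ (j + 1))
  · apply Summable.mul_left
    exact (summable_geometric_of_lt_one (le_of_lt (qpos hβ)) (qlt hβ)).comp_injective
      (add_left_injective 1)
  · intro j
    rw [Real.norm_eq_abs, abs_mul, abs_pow, qabs hβ]
    exact mul_le_mul_of_nonneg_right (hw j) (by positivity)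

lemma geom_tsum (hβ : 1 < β) : ∑' j : ℕ, β⁻¹ ^ (j + 1) = (β - 1)⁻¹ := by
  have h1 : ∑' j : ℕ, β⁻¹ ^ (j + 1) = β⁻¹ * ∑' j : ℕ, β⁻¹ ^ j := by
    rw [← tsum_mul_left]
    congr 1; funext j; rw [pow_succ]; ring
  rw [h1, tsum_geometric_of_lt_one (le_of_lt (qpos hβ)) (qlt hβ)]
  have hb0 : β ≠ 0 := by linarith
  have hb1 : β - 1 ≠ 0 := by intro h; apply absurd hβ; simp; linarith
  field_simp

lemma val_abs_le (hβ : 1 < β) {w : ℕ → ℤ} {B : ℝ} (hw : ∀ j, |(w j : ℝ)| ≤ B) :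
    |val β w| ≤ B * (β - 1)⁻¹ := by
  have hs := val_summable hβ hw
  have hB : 0 ≤ B := le_trans (abs_nonneg _) (hw 0)
  have hsabs : Summable (fun j => |(w j : ℝ) * (-β⁻¹) ^ (j + 1)|) := hs.abs
  have h1 : |val β w| ≤ ∑' j, |(w j : ℝ) * (-β⁻¹) ^ (j + 1)| := by
    have h := norm_tsum_le_tsum_norm (f := fun j => (w j : ℝ) * (-β⁻¹) ^ (j + 1))
      (by simp only [Real.norm_eq_abs]; exact hsabs)
    simp only [Real.norm_eq_abs] at h
    exact h
  refine le_trans h1 ?_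
  calc (∑' j, |(w j : ℝ) * (-β⁻¹) ^ (j + 1)|) ≤ ∑' j, B * β⁻¹ ^ (j + 1) := by
        apply Summable.tsum_le_tsum _ hsabs
        · apply Summable.mul_left
          exact (summable_geometric_of_lt_one (le_of_lt (qpos hβ)) (qlt hβ)).comp_injective
            (add_left_injective 1)
        · intro j
          rw [abs_mul, abs_pow, qabs hβ]
          exact mul_le_mul_of_nonneg_right (hw j) (by positivity)
    _ = B * (β - 1)⁻¹ := by rw [tsum_mul_left, geom_tsum hβ]

lemma val_shift_one (hβ : 1 < β) {w : ℕ → ℤ} {B : ℝ} (hw : ∀ j, |(w j : ℝ)| ≤ B) :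
    val β w = (-β⁻¹) * ((w 0 : ℝ) + val β (fun k => w (1 + k))) := by
  have hs := val_summable hβ hw
  have hshift : ∀ j, |((w (1 + j) : ℤ) : ℝ)| ≤ B := fun j => hw _
  have hs2 := val_summable hβ hshift
  unfold val
  rw [Summable.tsum_eq_zero_add hs]
  have : ∀ n : ℕ, (w (n + 1) : ℝ) * (-β⁻¹) ^ (n + 1 + 1) =
      (-β⁻¹) * ((w (1 + n) : ℝ) * (-β⁻¹) ^ (n + 1)) := by
    intro n; rw [add_comm 1 n]; ring
  rw [tsum_congr this, tsum_mul_left]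
  ring

lemma neg_beta_mul_val (hβ : 1 < β) {w : ℕ → ℤ} {B : ℝ} (hw : ∀ j, |(w j : ℝ)| ≤ B) :
    -β * val β w = (w 0 : ℝ) + val β (fun k => w (1 + k)) := by
  rw [val_shift_one hβ hw]
  have hb0 : β ≠ 0 := by linarith
  field_simp

lemma val_zero_prefix (hβ : 1 < β) {B : ℝ} (N : ℕ) : ∀ (w : ℕ → ℤ), (∀ j, |(w j : ℝ)| ≤ B) →
    (∀ j < N, w j = 0) →
    val β w = (-β⁻¹) ^ N * val β (fun k => w (N + k)) := by
  induction N with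
  | zero => intro w hw h0; simp
  | succ N ih =>
    intro w hw h0
    rw [val_shift_one hβ hw, h0 0 (Nat.succ_pos N)]
    have hsh : ∀ j, |((w (1 + j) : ℤ) : ℝ)| ≤ B := fun j => hw _
    have h0' : ∀ j < N, w (1 + j) = 0 := fun j hj => h0 (1 + j) (by omega)
    rw [ih _ hsh h0']
    have : (fun k => w (1 + (N + k))) = (fun k => w (N + 1 + k)) := by
      funext k; congr 1; omega
    rw [this]
    push_cast
    ring

lemma val_sub (hβ : 1 < β) {u v : ℕ → ℤ} {B : ℝ} (hu : ∀ j, |(u j : ℝ)| ≤ B)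
    (hv : ∀ j, |(v j : ℝ)| ≤ B) :
    val β (fun j => u j - v j) = val β u - val β v := by
  unfold val
  rw [← Summable.tsum_sub (val_summable hβ hu) (val_summable hβ hv)]
  congr 1; funext j; push_cast; ring

/- ## the value of the digit sequence -/

lemma val_digits (hβ : 1 < β) (hl₁ : -1 < l) (hl₂ : l ≤ 0) {x : ℝ}
    (hx : x ∈ Set.Ico l (l + 1)) : val β (negBetaDigit β l x) = x := by
  have hs := val_summable hβ (digit_abs_le hβ hl₁ hl₂ hx)
  have hqb : (-β⁻¹) * (-β) = 1 := by
    have hb0 : β ≠ 0 := by linarith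
    field_simp
  have hpartial : ∀ N : ℕ, ∑ j ∈ Finset.range N, (negBetaDigit β l x j : ℝ) * (-β⁻¹) ^ (j + 1)
      = x - (-β⁻¹) ^ N * ((negBetaT β l)^[N] x) := by
    intro N
    induction N with
    | zero => simp
    | succ N ih =>
      rw [Finset.sum_range_succ, ih, T_iter_succ]
      set A := (negBetaT β l)^[N] x
      set D := (negBetaDigit β l x N : ℝ)
      have : (-β⁻¹) ^ (N + 1) * (-β * A - D) = (-β⁻¹)^N * ((-β⁻¹) * (-β)) * A
          - (-β⁻¹)^(N+1) * D := by ring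
      rw [this, hqb]
      ring
  have hlim : Filter.Tendsto (fun N => (-β⁻¹) ^ N * ((negBetaT β l)^[N] x))
      Filter.atTop (nhds 0) := by
    have hnorm : ∀ N : ℕ, ‖(-β⁻¹) ^ N * ((negBetaT β l)^[N] x)‖ ≤ β⁻¹ ^ N := by
      intro N
      have hmem := T_iter_mem (β := β) hx N
      have habs : |((negBetaT β l)^[N] x)| ≤ 1 := by
        rw [abs_le]; obtain ⟨h1, h2⟩ := hmem
        constructor <;> linarith
      rw [Real.norm_eq_abs, abs_mul, abs_pow, qabs hβ]
      calc β⁻¹ ^ N * |((negBetaT β l)^[N] x)| ≤ β⁻¹ ^ N * 1 :=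
            mul_le_mul_of_nonneg_left habs (by positivity)
        _ = β⁻¹ ^ N := mul_one _
    exact squeeze_zero_norm hnorm
      (tendsto_pow_atTop_nhds_zero_of_lt_one (le_of_lt (qpos hβ)) (qlt hβ))
  have h2 : Filter.Tendsto (fun N => ∑ j ∈ Finset.range N,
      (negBetaDigit β l x j : ℝ) * (-β⁻¹) ^ (j + 1)) Filter.atTop (nhds x) := by
    have := Filter.Tendsto.sub (tendsto_const_nhds (x := x)) hlim
    rw [sub_zero] at this
    exact this.congr (fun N => (hpartial N).symm)
  exact tendsto_nhds_unique hs.hasSum.tendsto_sum_nat h2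

/- ## the key comparison estimate -/

lemma val_sub_eq (hβ : 1 < β) {u v : ℕ → ℤ} {B : ℝ} (hu : ∀ j, |(u j : ℝ)| ≤ B)
    (hv : ∀ j, |(v j : ℝ)| ≤ B) (m : ℕ) (hagree : ∀ k < m, u k = v k) :
    val β v - val β u = (-β⁻¹) ^ (m + 1) * (((v m : ℝ) - (u m : ℝ)) +
      (val β (fun k => v (m + 1 + k)) - val β (fun k => u (m + 1 + k)))) := by
  set w : ℕ → ℤ := fun j => v j - u j with hw
  have hwB : ∀ j, |(w j : ℝ)| ≤ 2 * B := by
    intro j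
    have h1 := abs_le.mp (hu j)
    have h2 := abs_le.mp (hv j)
    simp only [hw]
    push_cast
    rw [abs_le]
    constructor <;> [linarith [h1.1, h1.2, h2.1, h2.2]; linarith [h1.1, h1.2, h2.1, h2.2]]
  have hw0 : ∀ j < m, w j = 0 := by
    intro j hj; simp only [hw]; rw [hagree j hj]; ring
  have h1 : val β w = val β v - val β u := val_sub hβ hv hu
  have h2 : val β w = (-β⁻¹) ^ m * val β (fun k => w (m + k)) :=
    val_zero_prefix hβ m w hwB hw0
  have hwsB : ∀ j, |((w (m + j) : ℤ) : ℝ)| ≤ 2 * B := fun j => hwB _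
  have h3 : val β (fun k => w (m + k)) =
      (-β⁻¹) * ((w (m + 0) : ℝ) + val β (fun k => w (m + (1 + k)))) := by
    have := val_shift_one hβ hwsB
    convert this using 3
  have h4 : val β (fun k => w (m + (1 + k))) =
      val β (fun k => v (m + 1 + k)) - val β (fun k => u (m + 1 + k)) := by
    have heq : (fun k => w (m + (1 + k))) = fun k => v (m + 1 + k) - u (m + 1 + k) := by
      funext k; simp only [hw]; congr 2 <;> omega
    rw [heq]
    exact val_sub hβ (fun j => hv _) (fun j => hu _)
  rw [← h1, h2, h3, h4]
  simp only [hw, add_zero]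
  push_cast
  ring

lemma pow_min (hβ : 1 < β) (m : ℕ) (c : ℝ) : β⁻¹ * min c 0 ≤ β⁻¹ ^ (m + 1) * c := by
  rcases le_or_gt 0 c with h | h
  · rw [min_eq_right h]
    have : 0 ≤ β⁻¹ ^ (m + 1) * c := by positivity
    linarith
  · rw [min_eq_left (le_of_lt h)]
    have hp : β⁻¹ ^ (m + 1) ≤ β⁻¹ := by
      calc β⁻¹ ^ (m + 1) ≤ β⁻¹ ^ 1 :=
        pow_le_pow_of_le_one (le_of_lt (qpos hβ)) (le_of_lt (qlt hβ)) (by omega)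
      _ = β⁻¹ := pow_one _
    calc β⁻¹ * c ≤ β⁻¹ ^ (m + 1) * c := by
          apply mul_le_mul_of_nonpos_right _ (le_of_lt h)
          exact hp
      _ = β⁻¹ ^ (m + 1) * c := rfl

lemma val_diff_ge (hβ : 1 < β) {u v : ℕ → ℤ} {B : ℝ} (hu : ∀ j, |(u j : ℝ)| ≤ B)
    (hv : ∀ j, |(v j : ℝ)| ≤ B) (m : ℕ) (hagree : ∀ k < m, u k = v k)
    (hsign : (0 : ℤ) < (-1) ^ (m + 1) * (v m - u m)) {c : ℝ}
    (hc : |val β (fun k => v (m + 1 + k)) - val β (fun k => u (m + 1 + k))| ≤ c) :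
    β⁻¹ ^ (m + 1) * (1 - c) ≤ val β v - val β u := by
  have heq := val_sub_eq hβ hu hv m hagree
  set E := val β (fun k => v (m + 1 + k)) - val β (fun k => u (m + 1 + k)) with hE
  have hD : (1 : ℝ) ≤ (-1) ^ (m + 1) * ((v m : ℝ) - (u m : ℝ)) := by
    have h1 := Int.add_one_le_iff.mpr hsign
    rw [zero_add] at h1
    exact_mod_cast h1
  have hEc : -c ≤ (-1 : ℝ) ^ (m + 1) * E := by
    have habs : |(-1 : ℝ) ^ (m + 1) * E| = |E| := by
      rw [abs_mul, abs_pow, abs_neg, abs_one, one_pow, one_mul]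
    have := neg_abs_le ((-1 : ℝ) ^ (m + 1) * E)
    rw [habs] at this
    linarith
  have hrw : val β v - val β u =
      β⁻¹ ^ (m + 1) * ((-1) ^ (m + 1) * ((v m : ℝ) - (u m : ℝ)) + (-1) ^ (m + 1) * E) := by
    rw [heq]
    ring_nf
  rw [hrw]
  apply mul_le_mul_of_nonneg_left _ (by positivity)
  linarith

lemma le_of_forall_pow (hβ : 1 < β) {a K : ℝ} (h : ∀ k : ℕ, a ≤ K * β⁻¹ ^ k) : a ≤ 0 := by
  have ht : Filter.Tendsto (fun k : ℕ => K * β⁻¹ ^ k) Filter.atTop (nhds 0) := by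
    have := (tendsto_pow_atTop_nhds_zero_of_lt_one (le_of_lt (qpos hβ)) (qlt hβ)).const_mul K
    simpa using this
  exact ge_of_tendsto' ht h


/- ## monotonicity of digits w.r.t. the alternate order -/

lemma agree_iter (hβ : 1 < β) {x y : ℝ} (n : ℕ)
    (h : ∀ k < n, negBetaDigit β l x k = negBetaDigit β l y k) :
    (negBetaT β l)^[n] y - (negBetaT β l)^[n] x = (-β) ^ n * (y - x) := by
  induction n with
  | zero => simp
  | succ n ih =>
    have hag : ∀ k < n, negBetaDigit β l x k = negBetaDigit β l y k :=
      fun k hk => h k (by omega)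
    have hn : negBetaDigit β l x n = negBetaDigit β l y n := h n (by omega)
    rw [T_iter_succ, T_iter_succ, hn]
    have := ih hag
    rw [pow_succ]
    nlinarith [this]

lemma digits_lt (hβ : 1 < β) {x y : ℝ} (hx : x ∈ Set.Ico l (l + 1))
    (hy : y ∈ Set.Ico l (l + 1)) (hxy : x < y) :
    AltLt (negBetaDigit β l x) (negBetaDigit β l y) := by
  have hne : ∃ n, negBetaDigit β l x n ≠ negBetaDigit β l y n := by
    by_contra hc
    push_neg at hc
    obtain ⟨n, hn⟩ := pow_unbounded_of_one_lt (y - x)⁻¹ hβ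
    have hiter := agree_iter hβ (l := l) n (fun k _ => hc k)
    have hxn := T_iter_mem (β := β) hx n
    have hyn := T_iter_mem (β := β) hy n
    have h1 : (negBetaT β l)^[n] y - (negBetaT β l)^[n] x < 1 := by
      obtain ⟨a1, a2⟩ := hxn; obtain ⟨b1, b2⟩ := hyn; linarith
    have h2 : |(-β : ℝ)| ^ n = β ^ n := by
      rw [abs_neg, abs_of_pos (by linarith)]
    have h3 : β ^ n * (y - x) ≤ |(-β) ^ n * (y - x)| := by
      rw [abs_mul, abs_pow, h2, abs_of_pos (by linarith)]
    have h4 : |(-β) ^ n * (y - x)| = |(negBetaT β l)^[n] y - (negBetaT β l)^[n] x| := by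
      rw [hiter]
    have h5 : |(negBetaT β l)^[n] y - (negBetaT β l)^[n] x| < 1 := by
      rw [abs_lt]
      obtain ⟨a1, a2⟩ := hxn; obtain ⟨b1, b2⟩ := hyn
      constructor <;> linarith
    have h6 : (y - x)⁻¹ * (y - x) = 1 := inv_mul_cancel₀ (by linarith)
    nlinarith [hn, h1, h3, h4, h5]
  classical
  set m := Nat.find hne with hm
  have hdiff : negBetaDigit β l x m ≠ negBetaDigit β l y m := Nat.find_spec hne
  have hagree : ∀ k < m, negBetaDigit β l x k = negBetaDigit β l y k :=
    fun k hk => not_not.mp (Nat.find_min hne hk)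
  refine ⟨m, hagree, ?_⟩
  have hiter := agree_iter hβ (l := l) m hagree
  have hxm := T_iter_mem (β := β) hx m
  have hym := T_iter_mem (β := β) hy m
  set X := (negBetaT β l)^[m] x
  set Y := (negBetaT β l)^[m] y
  rcases Nat.even_or_odd m with he | ho
  · have hpow : (-β : ℝ) ^ m = β ^ m := he.neg_pow β
    have hYX : X < Y := by nlinarith [hiter, pow_pos (show (0:ℝ) < β by linarith) m]
    have hfl : negBetaDigit β l y m ≤ negBetaDigit β l x m := by
      unfold negBetaDigit
      apply Int.floor_le_floor
      nlinarith
    have hlt : negBetaDigit β l y m < negBetaDigit β l x m :=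
      lt_of_le_of_ne hfl (fun h => hdiff h.symm)
    have hodd : Odd (m + 1) := Even.add_one he
    rw [hodd.neg_one_pow]
    omega
  · have hpow : (-β : ℝ) ^ m = -(β ^ m) := ho.neg_pow β
    have hYX : Y < X := by nlinarith [hiter, pow_pos (show (0:ℝ) < β by linarith) m]
    have hfl : negBetaDigit β l x m ≤ negBetaDigit β l y m := by
      unfold negBetaDigit
      apply Int.floor_le_floor
      nlinarith
    have hlt : negBetaDigit β l x m < negBetaDigit β l y m := lt_of_le_of_ne hfl hdiff
    have heven : Even (m + 1) := Odd.add_one ho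
    rw [heven.neg_one_pow]
    omega

/- ## order lemmas -/

lemma altLt_step {u v w : ℕ → ℤ} (m : ℕ) (h1 : ∀ k < m, u k = v k)
    (h2 : (-1 : ℤ) ^ (m + 1) * (v m - u m) > 0) (h3 : AltLe v w) :
    ∃ m' ≤ m, (∀ k < m', u k = w k) ∧ (-1 : ℤ) ^ (m' + 1) * (w m' - u m') > 0 := by
  rcases h3 with h3 | rfl
  · obtain ⟨n, hn1, hn2⟩ := h3
    rcases lt_trichotomy n m with h | h | h
    · refine ⟨n, le_of_lt h, fun k hk => (h1 k (by omega)).trans (hn1 k hk), ?_⟩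
      rw [h1 n h]
      exact hn2
    · subst h
      refine ⟨n, le_refl n, fun k hk => (h1 k hk).trans (hn1 k hk), ?_⟩
      have hr : (-1 : ℤ) ^ (n + 1) * (w n - u n) =
          (-1 : ℤ) ^ (n + 1) * (w n - v n) + (-1 : ℤ) ^ (n + 1) * (v n - u n) := by ring
      rw [hr]
      linarith
    · refine ⟨m, le_refl m, fun k hk => (h1 k hk).trans (hn1 k (by omega)), ?_⟩
      rw [← hn1 m h]
      exact h2
  · exact ⟨m, le_refl m, h1, h2⟩


lemma hrstr_upto (β l : ℝ) (rstr : ℕ → ℤ)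
    (hrstr : ∀ i : ℕ, ∃ ε₀ > 0, ∀ ε : ℝ, 0 < ε → ε < ε₀ →
      negBetaDigit β l (l + 1 - ε) i = rstr i) :
    ∀ m : ℕ, ∃ ε₁ : ℝ, 0 < ε₁ ∧ ε₁ ≤ 1 ∧ ∀ ε : ℝ, 0 < ε → ε < ε₁ →
      ∀ i ≤ m, negBetaDigit β l (l + 1 - ε) i = rstr i := by
  intro m
  induction m with
  | zero =>
    obtain ⟨ε₀, hp, h⟩ := hrstr 0
    refine ⟨min ε₀ 1, lt_min hp one_pos, min_le_right _ _, ?_⟩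
    intro ε hε hlt i hi
    have : i = 0 := Nat.le_zero.mp hi
    subst this
    exact h ε hε (lt_of_lt_of_le hlt (min_le_left _ _))
  | succ m ih =>
    obtain ⟨ε₁, h1, h1le, hA⟩ := ih
    obtain ⟨ε₀, h0, hB⟩ := hrstr (m + 1)
    refine ⟨min ε₁ ε₀, lt_min h1 h0, le_trans (min_le_left _ _) h1le, ?_⟩
    intro ε hε hlt i hi
    rcases Nat.lt_succ_iff_lt_or_eq.mp (Nat.lt_succ_of_le hi) with h | h
    · exact hA ε hε (lt_of_lt_of_le hlt (min_le_left _ _)) i (by omega)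
    · subst h
      exact hB ε hε (lt_of_lt_of_le hlt (min_le_right _ _))

end NBaux

theorem stmt_12 (β l : ℝ) (hβ : 1 < β) (hl₁ : -1 < l) (hl₂ : l ≤ 0)
    (rstr : ℕ → ℤ)
    (hrstr : ∀ i : ℕ, ∃ ε₀ > 0, ∀ ε : ℝ, 0 < ε → ε < ε₀ →
      negBetaDigit β l (l + 1 - ε) i = rstr i)
    (xs : ℕ → ℤ) :
    (∃ x ∈ Set.Ico l (l + 1), ∀ i : ℕ, negBetaDigit β l x i = xs i) ↔
      ∀ i : ℕ, AltLe (negBetaDigit β l l) (fun k => xs (i + k)) ∧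
        AltLt (fun k => xs (i + k)) rstr := by
  have hβ0 : (0 : ℝ) < β := by linarith
  have hq0 : (0 : ℝ) < β⁻¹ := NBaux.qpos hβ
  have hlI : l ∈ Set.Ico l (l + 1) := ⟨le_refl l, by linarith⟩
  have hdlB : ∀ j, |(negBetaDigit β l l j : ℝ)| ≤ 2 * β + 2 :=
    NBaux.digit_abs_le hβ hl₁ hl₂ hlI
  constructor
  · rintro ⟨x, hx, hdig⟩ i
    have hfun : (fun k => xs (i + k)) = negBetaDigit β l ((negBetaT β l)^[i] x) := by
      funext k
      rw [← hdig (i + k)]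
      exact NBaux.digit_shift x i k
    set z := (negBetaT β l)^[i] x with hz
    have hzm : z ∈ Set.Ico l (l + 1) := NBaux.T_iter_mem hx i
    constructor
    · rw [hfun]
      rcases eq_or_lt_of_le hzm.1 with he | hlt
      · right; rw [← he]
      · left; exact NBaux.digits_lt hβ hlI hzm hlt
    · rw [hfun]
      obtain ⟨hz1, hz2⟩ := hzm
      set y' := (z + (l + 1)) / 2 with hy'
      have hy'1 : l ≤ y' := by rw [hy']; linarith
      have hy'2 : y' < l + 1 := by rw [hy']; linarith
      have hzy' : z < y' := by rw [hy']; linarith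
      obtain ⟨m, hag, hsg⟩ := NBaux.digits_lt hβ ⟨hz1, hz2⟩ ⟨hy'1, hy'2⟩ hzy'
      obtain ⟨ε₁, hε₁p, hε₁le, hε₁⟩ := NBaux.hrstr_upto β l rstr hrstr m
      set ε := min (ε₁ / 2) ((l + 1 - y') / 2) with hε
      have hεp : 0 < ε := lt_min (by linarith) (by linarith)
      have hεA : ε < ε₁ := lt_of_le_of_lt (min_le_left _ _) (by linarith)
      have hεy' : y' ≤ l + 1 - ε := by
        have := min_le_right (ε₁ / 2) ((l + 1 - y') / 2)
        rw [← hε] at this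
        linarith
      have hε1 : ε < 1 := by
        have := min_le_left (ε₁ / 2) ((l + 1 - y') / 2)
        rw [← hε] at this
        linarith
      have hwm : l + 1 - ε ∈ Set.Ico l (l + 1) := ⟨by linarith, by linarith⟩
      have hle : AltLe (negBetaDigit β l y') (negBetaDigit β l (l + 1 - ε)) := by
        rcases eq_or_lt_of_le hεy' with he | hlt
        · right; rw [he]
        · left; exact NBaux.digits_lt hβ ⟨hy'1, hy'2⟩ hwm hlt
      obtain ⟨m', hm'le, hag', hsg'⟩ := NBaux.altLt_step m hag hsg hle
      refine ⟨m', ?_, ?_⟩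
      · intro k hk
        rw [hag' k hk]
        exact hε₁ ε hεp hεA k (by omega)
      · have hrw := hε₁ ε hεp hεA m' hm'le
        rw [← hrw]
        exact hsg'
  · intro hcond
    have hrstr0 : |(rstr 0 : ℝ)| ≤ 2 * β + 2 := by
      obtain ⟨ε₀, hp, h⟩ := hrstr 0
      have hεp : 0 < min (ε₀ / 2) (1 / 2) := lt_min (by linarith) (by norm_num)
      have hε0 : min (ε₀ / 2) (1 / 2) < ε₀ := lt_of_le_of_lt (min_le_left _ _) (by linarith)
      have hε1 : min (ε₀ / 2) (1 / 2) < 1 := lt_of_le_of_lt (min_le_right _ _) (by norm_num)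
      have hmem : l + 1 - min (ε₀ / 2) (1 / 2) ∈ Set.Ico l (l + 1) := ⟨by linarith, by linarith⟩
      rw [← h _ hεp hε0]
      exact NBaux.digit_abs_le hβ hl₁ hl₂ hmem 0
    have hxsB : ∀ i, |(xs i : ℝ)| ≤ 2 * β + 2 := by
      intro i
      obtain ⟨h1, h2⟩ := hcond i
      have hup : xs i ≤ negBetaDigit β l l 0 := by
        rcases h1 with hlt | heq
        · obtain ⟨m, ha, hs⟩ := hlt
          rcases Nat.eq_zero_or_pos m with rfl | hm
          · have h0 : ((-1 : ℤ)) ^ (0 + 1) = -1 := by norm_num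
            rw [h0] at hs
            have hxi : xs (i + 0) < negBetaDigit β l l 0 := by linarith
            simpa using hxi.le
          · have := ha 0 hm
            simp only [Nat.add_zero] at this
            exact le_of_eq this.symm
        · have := congrFun heq 0
          simp only [Nat.add_zero] at this
          exact le_of_eq this.symm
      have hlo : rstr 0 ≤ xs i := by
        obtain ⟨m, ha, hs⟩ := h2
        rcases Nat.eq_zero_or_pos m with rfl | hm
        · have h0 : ((-1 : ℤ)) ^ (0 + 1) = -1 := by norm_num
          rw [h0] at hs
          have hxi : rstr 0 < xs (i + 0) := by linarith
          simpa using hxi.le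
        · have := ha 0 hm
          simp only [Nat.add_zero] at this
          exact le_of_eq this.symm
      have hu' := abs_le.mp (hdlB 0)
      have hl' := abs_le.mp hrstr0
      have hup' : (xs i : ℝ) ≤ (negBetaDigit β l l 0 : ℝ) := Int.cast_le.mpr hup
      have hlo' : ((rstr 0 : ℤ) : ℝ) ≤ (xs i : ℝ) := Int.cast_le.mpr hlo
      rw [abs_le]
      constructor <;> linarith
    set Y : ℕ → ℝ := fun n => NBaux.val β (fun k => xs (n + k)) with hY
    have hYdef : ∀ n, Y n = NBaux.val β (fun k => xs (n + k)) := fun n => rfl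
    have hYb : ∀ n, ∀ j : ℕ, |((xs (n + j) : ℤ) : ℝ)| ≤ 2 * β + 2 := fun n j => hxsB _
    have hYshift : ∀ n m : ℕ, NBaux.val β (fun k => xs (n + (m + k))) = Y (n + m) := by
      intro n m
      rw [hYdef (n + m)]
      congr 1
      funext k
      congr 1
      omega
    have hYabs : ∀ n, |Y n| ≤ (2 * β + 2) * (β - 1)⁻¹ := fun n => NBaux.val_abs_le hβ (hYb n)
    have hval_l : NBaux.val β (negBetaDigit β l l) = l := NBaux.val_digits hβ hl₁ hl₂ hlI
    have hstep : ∀ t : ℝ, 0 ≤ t → (∀ n, l - t ≤ Y n ∧ Y n ≤ l + 1 + t) →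
        ∀ n, (l - t * β⁻¹ ≤ Y n ∧ ∃ ε : ℝ, 0 < ε ∧ Y n ≤ l + 1 - ε + t * β⁻¹) := by
      intro t ht hP n
      have htb : 0 ≤ t * β⁻¹ := mul_nonneg ht (le_of_lt hq0)
      constructor
      · rcases (hcond n).1 with hlt | heq
        · obtain ⟨m, hag, hsg⟩ := hlt
          have hvb : ∀ j : ℕ, |((xs (n + j) : ℤ) : ℝ)| ≤ 2 * β + 2 := hYb n
          have hutail : NBaux.val β (fun k => negBetaDigit β l l (m + 1 + k)) =
              (negBetaT β l)^[m + 1] l := by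
            have hfe : (fun k => negBetaDigit β l l (m + 1 + k)) =
                negBetaDigit β l ((negBetaT β l)^[m + 1] l) :=
              funext fun k => NBaux.digit_shift l (m + 1) k
            rw [hfe]
            exact NBaux.val_digits hβ hl₁ hl₂ (NBaux.T_iter_mem hlI (m + 1))
          have hvtail : NBaux.val β (fun k => xs (n + (m + 1 + k))) = Y (n + (m + 1)) :=
            hYshift n (m + 1)
          obtain ⟨d1, d2⟩ := NBaux.T_iter_mem (β := β) hlI (m + 1)
          obtain ⟨c1, c2⟩ := hP (n + (m + 1))
          have hcbound : |NBaux.val β (fun k => xs (n + (m + 1 + k))) -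
              NBaux.val β (fun k => negBetaDigit β l l (m + 1 + k))| ≤ 1 + t := by
            rw [hvtail, hutail, abs_le]
            constructor <;> linarith
          have hkey := NBaux.val_diff_ge hβ hdlB hvb m hag hsg hcbound
          have hmin := NBaux.pow_min hβ m (1 - (1 + t))
          have hminval : min (1 - (1 + t)) 0 = -t := by
            rw [min_eq_left (by linarith)]; ring
          rw [hminval] at hmin
          rw [hYdef n]
          nlinarith [hkey, hmin, hval_l]
        · have hYn : Y n = l := by
            rw [hYdef n, ← heq]
            exact hval_l
          rw [hYn]
          linarith
      · obtain ⟨m, hag, hsg⟩ := (hcond n).2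
        obtain ⟨ε₁, hε₁p, hε₁le, hε₁⟩ := NBaux.hrstr_upto β l rstr hrstr m
        refine ⟨ε₁ / 2, by linarith, ?_⟩
        have hεp : 0 < ε₁ / 2 := by linarith
        have hεlt : ε₁ / 2 < ε₁ := by linarith
        have hwm : l + 1 - ε₁ / 2 ∈ Set.Ico l (l + 1) := ⟨by linarith, by linarith⟩
        have hd : ∀ k ≤ m, negBetaDigit β l (l + 1 - ε₁ / 2) k = rstr k :=
          fun k hk => hε₁ (ε₁ / 2) hεp hεlt k hk
        have hvb : ∀ j : ℕ, |((negBetaDigit β l (l + 1 - ε₁ / 2) j : ℤ) : ℝ)| ≤ 2 * β + 2 :=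
          NBaux.digit_abs_le hβ hl₁ hl₂ hwm
        have hub : ∀ j : ℕ, |((xs (n + j) : ℤ) : ℝ)| ≤ 2 * β + 2 := hYb n
        have hag2 : ∀ k < m, xs (n + k) = negBetaDigit β l (l + 1 - ε₁ / 2) k :=
          fun k hk => (hag k hk).trans (hd k (le_of_lt hk)).symm
        have hsg2 : (0 : ℤ) < (-1) ^ (m + 1) *
            (negBetaDigit β l (l + 1 - ε₁ / 2) m - xs (n + m)) := by
          rw [hd m (le_refl m)]
          exact hsg
        have hutail : NBaux.val β (fun k => xs (n + (m + 1 + k))) = Y (n + (m + 1)) :=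
          hYshift n (m + 1)
        have hvtail : NBaux.val β (fun k => negBetaDigit β l (l + 1 - ε₁ / 2) (m + 1 + k)) =
            (negBetaT β l)^[m + 1] (l + 1 - ε₁ / 2) := by
          have hfe : (fun k => negBetaDigit β l (l + 1 - ε₁ / 2) (m + 1 + k)) =
              negBetaDigit β l ((negBetaT β l)^[m + 1] (l + 1 - ε₁ / 2)) :=
            funext fun k => NBaux.digit_shift _ (m + 1) k
          rw [hfe]
          exact NBaux.val_digits hβ hl₁ hl₂ (NBaux.T_iter_mem hwm (m + 1))
        obtain ⟨d1, d2⟩ := NBaux.T_iter_mem (β := β) hwm (m + 1)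
        obtain ⟨c1, c2⟩ := hP (n + (m + 1))
        have hcbound : |NBaux.val β (fun k => negBetaDigit β l (l + 1 - ε₁ / 2) (m + 1 + k)) -
            NBaux.val β (fun k => xs (n + (m + 1 + k)))| ≤ 1 + t := by
          rw [hvtail, hutail, abs_le]
          constructor <;> linarith
        have hkey := NBaux.val_diff_ge hβ hub hvb m hag2 hsg2 hcbound
        have hvald : NBaux.val β (negBetaDigit β l (l + 1 - ε₁ / 2)) = l + 1 - ε₁ / 2 :=
          NBaux.val_digits hβ hl₁ hl₂ hwm
        have hmin := NBaux.pow_min hβ m (1 - (1 + t))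
        have hminval : min (1 - (1 + t)) 0 = -t := by
          rw [min_eq_left (by linarith)]; ring
        rw [hminval] at hmin
        rw [hYdef n]
        nlinarith [hkey, hmin, hvald]
    have ht00 : (0 : ℝ) ≤ (2 * β + 2) * (β - 1)⁻¹ + 2 := by
      have : (0 : ℝ) ≤ (2 * β + 2) * (β - 1)⁻¹ :=
        mul_nonneg (by linarith) (inv_nonneg.mpr (by linarith))
      linarith
    set t0 : ℝ := (2 * β + 2) * (β - 1)⁻¹ + 2 with ht0
    have hit : ∀ k : ℕ, ∀ n, l - t0 * β⁻¹ ^ k ≤ Y n ∧ Y n ≤ l + 1 + t0 * β⁻¹ ^ k := by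
      intro k
      induction k with
      | zero =>
        intro n
        have h := abs_le.mp (hYabs n)
        simp only [pow_zero, mul_one]
        constructor
        · rw [ht0]; linarith [h.1]
        · rw [ht0]; linarith [h.2]
      | succ k ih =>
        intro n
        obtain ⟨h1, ε, hεp, h2⟩ := hstep (t0 * β⁻¹ ^ k)
          (mul_nonneg ht00 (pow_nonneg (le_of_lt hq0) k)) ih n
        constructor
        · have he : l - t0 * β⁻¹ ^ (k + 1) = l - t0 * β⁻¹ ^ k * β⁻¹ := by ring
          rw [he]
          exact h1
        · have he : l + 1 + t0 * β⁻¹ ^ (k + 1) = l + 1 + t0 * β⁻¹ ^ k * β⁻¹ := by ring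
          rw [he]
          linarith
    have hfin : ∀ n, l ≤ Y n ∧ Y n ≤ l + 1 := by
      intro n
      constructor
      · have := NBaux.le_of_forall_pow hβ (a := l - Y n) (K := t0)
          (fun k => by linarith [(hit k n).1])
        linarith
      · have := NBaux.le_of_forall_pow hβ (a := Y n - (l + 1)) (K := t0)
          (fun k => by linarith [(hit k n).2])
        linarith
    have hstrict : ∀ n, Y n < l + 1 := by
      intro n
      have h0 : ∀ n, l - 0 ≤ Y n ∧ Y n ≤ l + 1 + 0 := by
        intro n'
        obtain ⟨a, b⟩ := hfin n'
        constructor <;> linarith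
      obtain ⟨-, ε, hεp, h2⟩ := hstep 0 le_rfl h0 n
      have hz : (0 : ℝ) * β⁻¹ = 0 := by ring
      rw [hz] at h2
      linarith
    have hrel : ∀ n, -β * Y n = (xs n : ℝ) + Y (n + 1) := by
      intro n
      have h2 : -β * NBaux.val β (fun k => xs (n + k)) =
          ((xs (n + 0) : ℤ) : ℝ) + NBaux.val β (fun k => xs (n + (1 + k))) :=
        NBaux.neg_beta_mul_val hβ (hYb n)
      rw [hYdef n, ← hYshift n 1]
      have hn0 : n + 0 = n := rfl
      rw [← hn0]
      exact h2
    have hfloor : ∀ n, ⌊-β * Y n - l⌋ = xs n := by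
      intro n
      have h1 := hrel n
      have h2 := hfin (n + 1)
      have h3 := hstrict (n + 1)
      have hsplit : -β * Y n - l = (Y (n + 1) - l) + (xs n : ℝ) := by
        linear_combination h1
      rw [hsplit, Int.floor_add_intCast]
      have h0 : ⌊Y (n + 1) - l⌋ = 0 := by
        apply Int.floor_eq_zero_iff.mpr
        constructor
        · linarith [h2.1]
        · linarith [h3]
      rw [h0, zero_add]
    have hT : ∀ n, negBetaT β l (Y n) = Y (n + 1) := by
      intro n
      unfold negBetaT
      rw [hfloor n]
      linarith [hrel n]
    have hTiter : ∀ n, (negBetaT β l)^[n] (Y 0) = Y n := by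
      intro n
      induction n with
      | zero => rfl
      | succ n ih => rw [Function.iterate_succ_apply', ih, hT]
    refine ⟨Y 0, ⟨(hfin 0).1, hstrict 0⟩, ?_⟩
    intro i
    unfold negBetaDigit
    rw [hTiter i]
    exact hfloor i
end

section
/- Every suffix of d*(r) = (r_i)_{i≥1} satisfies d(l) ⪯_alt (r_i, r_{i+1}, ...) ⪯_alt d*(r) for all i ≥ 1. -/
lemma negBetaT_mem_s13 (β l x : ℝ) : l ≤ negBetaT β l x ∧ negBetaT β l x < l + 1 := by
  have h1 := Int.floor_le (-β * x - l)
  have h2 := Int.lt_floor_add_one (-β * x - l)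
  constructor <;> [skip; skip] <;> (unfold negBetaT; linarith)

lemma negBetaDigit_shift (β l x : ℝ) (i k : ℕ) :
    negBetaDigit β l x (i + k) = negBetaDigit β l ((negBetaT β l)^[i] x) k := by
  unfold negBetaDigit
  rw [Nat.add_comm, Function.iterate_add_apply]

lemma negBetaDigit_mono (β l : ℝ) (hβ : 1 < β) {x y : ℝ} (hxy : x ≤ y) :
    AltLe (negBetaDigit β l x) (negBetaDigit β l y) := by
  by_cases h : negBetaDigit β l x = negBetaDigit β l y
  · exact Or.inr h
  have hexists : ∃ k, negBetaDigit β l x k ≠ negBetaDigit β l y k := Function.ne_iff.mp h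
  set m := Nat.find hexists with hm_def
  have hm : negBetaDigit β l x m ≠ negBetaDigit β l y m := Nat.find_spec hexists
  have hmin : ∀ j < m, negBetaDigit β l x j = negBetaDigit β l y j := fun j hj =>
    not_not.mp (Nat.find_min hexists hj)
  -- sign-alternating difference of iterates
  have key : ∀ k, (∀ j < k, negBetaDigit β l x j = negBetaDigit β l y j) →
      0 ≤ (-1 : ℝ) ^ k * ((negBetaT β l)^[k] y - (negBetaT β l)^[k] x) := by
    intro k
    induction k with
    | zero => intro _; simpa using hxy
    | succ k ih =>
      intro hall
      have ih' := ih (fun j hj => hall j (hj.trans (Nat.lt_succ_self k)))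
      have hd : negBetaDigit β l x k = negBetaDigit β l y k := hall k (Nat.lt_succ_self k)
      have hx' : (negBetaT β l)^[k + 1] x =
          -β * ((negBetaT β l)^[k] x) - negBetaDigit β l x k := by
        rw [Function.iterate_succ_apply']; rfl
      have hy' : (negBetaT β l)^[k + 1] y =
          -β * ((negBetaT β l)^[k] y) - negBetaDigit β l y k := by
        rw [Function.iterate_succ_apply']; rfl
      rw [hx', hy', hd]
      have : (-1 : ℝ) ^ (k + 1) * (-β * (negBetaT β l)^[k] y - ↑(negBetaDigit β l y k) -
          (-β * (negBetaT β l)^[k] x - ↑(negBetaDigit β l y k))) =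
          β * ((-1 : ℝ) ^ k * ((negBetaT β l)^[k] y - (negBetaT β l)^[k] x)) := by
        ring
      rw [this]
      exact mul_nonneg (by linarith) ih'
  have hkey := key m hmin
  left
  refine ⟨m, hmin, ?_⟩
  rcases Nat.even_or_odd m with he | ho
  · -- m even : T^[m] x ≤ T^[m] y, digits reversed
    have hpow : (-1 : ℝ) ^ m = 1 := he.neg_one_pow
    rw [hpow, one_mul] at hkey
    have hle : -β * (negBetaT β l)^[m] y - l ≤ -β * (negBetaT β l)^[m] x - l := by
      nlinarith
    have hfl : negBetaDigit β l y m ≤ negBetaDigit β l x m := Int.floor_mono hle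
    have hlt : negBetaDigit β l y m < negBetaDigit β l x m := hfl.lt_of_ne (Ne.symm hm)
    have : ((-1 : ℤ)) ^ (m + 1) = -1 := by
      rw [pow_succ, he.neg_one_pow, one_mul]
    rw [this]
    nlinarith
  · have hpow : (-1 : ℝ) ^ m = -1 := ho.neg_one_pow
    rw [hpow] at hkey
    have hle : -β * (negBetaT β l)^[m] x - l ≤ -β * (negBetaT β l)^[m] y - l := by
      nlinarith
    have hfl : negBetaDigit β l x m ≤ negBetaDigit β l y m := Int.floor_mono hle
    have hlt : negBetaDigit β l x m < negBetaDigit β l y m := hfl.lt_of_ne hm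
    have : ((-1 : ℤ)) ^ (m + 1) = 1 := by
      have : Even (m + 1) := ho.add_one
      exact this.neg_one_pow
    rw [this]
    linarith

lemma altLe_of_approx (u v : ℕ → ℤ)
    (h : ∀ N, ∃ u' v' : ℕ → ℤ, (∀ k ≤ N, u' k = u k) ∧ (∀ k ≤ N, v' k = v k) ∧ AltLe u' v') :
    AltLe u v := by
  by_cases huv : u = v
  · exact Or.inr huv
  have hexists : ∃ k, u k ≠ v k := Function.ne_iff.mp huv
  set m := Nat.find hexists with hm_def
  have hm : u m ≠ v m := Nat.find_spec hexists
  have hmin : ∀ j < m, u j = v j := fun j hj => not_not.mp (Nat.find_min hexists hj)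
  obtain ⟨u', v', hu', hv', hle⟩ := h m
  rcases hle with hlt | heq
  · obtain ⟨m', hm'eq, hm'sgn⟩ := hlt
    have hne' : u' m' ≠ v' m' := by
      intro e
      rw [e, sub_self, mul_zero] at hm'sgn
      exact lt_irrefl 0 hm'sgn
    have hmm : m' = m := by
      rcases lt_trichotomy m' m with h1 | h1 | h1
      · exact absurd (by rw [hu' m' h1.le, hv' m' h1.le]; exact hmin m' h1) hne'
      · exact h1
      · have := hm'eq m h1
        rw [hu' m le_rfl, hv' m le_rfl] at this
        exact absurd this hm
    rw [hmm] at hm'sgn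
    left
    refine ⟨m, hmin, ?_⟩
    rwa [hu' m le_rfl, hv' m le_rfl] at hm'sgn
  · exfalso
    apply hm
    rw [← hu' m le_rfl, ← hv' m le_rfl, heq]

theorem stmt_13 (β l : ℝ) (hβ : 1 < β) (hl₁ : -1 < l) (hl₂ : l ≤ 0)
    (rstr : ℕ → ℤ)
    (hrstr : ∀ i : ℕ, ∃ ε₀ > 0, ∀ ε : ℝ, 0 < ε → ε < ε₀ →
      negBetaDigit β l (l + 1 - ε) i = rstr i)
    (i : ℕ) :
    AltLe (negBetaDigit β l l) (fun k => rstr (i + k)) ∧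
      AltLe (fun k => rstr (i + k)) rstr := by
  -- uniform prefix agreement
  have agree : ∀ N : ℕ, ∃ ε₀ > 0, ε₀ ≤ 1 ∧ ∀ ε : ℝ, 0 < ε → ε < ε₀ →
      ∀ j ≤ N, negBetaDigit β l (l + 1 - ε) j = rstr j := by
    intro N
    induction N with
    | zero =>
      obtain ⟨ε₀, hε₀, h0⟩ := hrstr 0
      refine ⟨min ε₀ 1, lt_min hε₀ one_pos, min_le_right _ _, ?_⟩
      intro ε hε hε' j hj
      interval_cases j
      exact h0 ε hε (hε'.trans_le (min_le_left _ _))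
    | succ N ih =>
      obtain ⟨ε₀, hε₀, hε₀1, hN⟩ := ih
      obtain ⟨ε₁, hε₁, h1⟩ := hrstr (N + 1)
      refine ⟨min ε₀ ε₁, lt_min hε₀ hε₁, (min_le_left _ _).trans hε₀1, ?_⟩
      intro ε hε hε' j hj
      rcases Nat.lt_succ_iff_lt_or_eq.mp (Nat.lt_succ_of_le hj) with h | h
      · exact hN ε hε (hε'.trans_le (min_le_left _ _)) j (Nat.lt_succ_iff.mp h)
      · subst h
        exact h1 ε hε (hε'.trans_le (min_le_right _ _))
  -- the i-th iterate of l+1-ε stays in [l, l+1)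
  have iter_mem : ∀ ε : ℝ, 0 < ε → ε ≤ 1 →
      l ≤ (negBetaT β l)^[i] (l + 1 - ε) ∧ (negBetaT β l)^[i] (l + 1 - ε) < l + 1 := by
    intro ε hε hε1
    cases i with
    | zero => constructor <;> simp <;> linarith
    | succ n =>
      rw [Function.iterate_succ_apply']
      exact negBetaT_mem_s13 β l _
  constructor
  · apply altLe_of_approx
    intro N
    obtain ⟨ε₀, hε₀, hε₀1, hag⟩ := agree (i + N)
    set ε := ε₀ / 2 with hε_def
    have hε : 0 < ε := by positivity
    have hε' : ε < ε₀ := by linarith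
    have hε1 : ε ≤ 1 := by linarith
    set y := (negBetaT β l)^[i] (l + 1 - ε) with hy_def
    have hy := iter_mem ε hε hε1
    refine ⟨negBetaDigit β l l, negBetaDigit β l y, fun k _ => rfl, ?_, ?_⟩
    · intro k hk
      show negBetaDigit β l y k = rstr (i + k)
      rw [hy_def, ← negBetaDigit_shift]
      exact hag ε hε hε' (i + k) (by omega)
    · exact negBetaDigit_mono β l hβ hy.1
  · apply altLe_of_approx
    intro N
    obtain ⟨ε₀, hε₀, hε₀1, hag⟩ := agree (i + N)
    set ε := ε₀ / 2 with hε_def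
    have hε : 0 < ε := by positivity
    have hε' : ε < ε₀ := by linarith
    have hε1 : ε ≤ 1 := by linarith
    set y := (negBetaT β l)^[i] (l + 1 - ε) with hy_def
    have hy := iter_mem ε hε hε1
    set ε'' := min (ε₀ / 2) ((l + 1 - y) / 2) with hε''_def
    have hε''pos : 0 < ε'' := lt_min (by positivity) (by linarith [hy.2])
    have hε''lt : ε'' < ε₀ := lt_of_le_of_lt (min_le_left _ _) (by linarith)
    have hyle : y ≤ l + 1 - ε'' := by
      have h1 : ε'' ≤ (l + 1 - y) / 2 := min_le_right _ _
      have h2 : 0 < l + 1 - y := by linarith [hy.2]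
      linarith
    refine ⟨negBetaDigit β l y, negBetaDigit β l (l + 1 - ε''), ?_, ?_, ?_⟩
    · intro k hk
      show negBetaDigit β l y k = rstr (i + k)
      rw [hy_def, ← negBetaDigit_shift]
      exact hag ε hε hε' (i + k) (by omega)
    · intro k hk
      exact hag ε'' hε''pos hε''lt k (by omega)
    · exact negBetaDigit_mono β l hβ hyle
end

section
/- If d(l) begins with two equal digits aa, then d(l) = a^ω and consequently l = -a/(β+1). -/
theorem stmt_15 (β l : ℝ) (hβ : 1 < β) (hl₁ : -1 < l) (hl₂ : l ≤ 0)
    (a : ℤ) (h0 : negBetaDigit β l l 0 = a) (h1 : negBetaDigit β l l 1 = a) :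
    (∀ k : ℕ, negBetaDigit β l l k = a) ∧ l = -(a : ℝ) / (β + 1) := by
  have hd0 : ⌊-β * l - l⌋ = a := by
    simpa [negBetaDigit] using h0
  have hd1 : ⌊-β * (-β * l - (a : ℝ)) - l⌋ = a := by
    have := h1
    simp only [negBetaDigit, Function.iterate_one, negBetaT, hd0] at this
    exact this
  have hA1 : (a : ℝ) ≤ -β * l - l := by
    rw [← hd0]; exact Int.floor_le _
  have hB1 : (a : ℝ) ≤ -β * (-β * l - (a : ℝ)) - l := by
    have := Int.floor_le (-β * (-β * l - (a : ℝ)) - l)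
    rwa [hd1] at this
  have hβ1 : (0:ℝ) < β - 1 := by linarith
  have key : (β + 1) * l = -(a : ℝ) := by nlinarith [hA1, hB1]
  have hβ1' : (0:ℝ) < β + 1 := by linarith
  have hl : l = -(a : ℝ) / (β + 1) := by
    field_simp
    linarith [key]
  have hfix : negBetaT β l l = l := by
    simp only [negBetaT, hd0]
    nlinarith [key]
  have hiter : ∀ k : ℕ, (negBetaT β l)^[k] l = l := by
    intro k
    induction k with
    | zero => simp
    | succ n ih => rw [Function.iterate_succ_apply', ih, hfix]
  refine ⟨fun k => ?_, hl⟩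
  simp only [negBetaDigit, hiter k]
  exact hd0
end

section
/- If T^q(l) ≠ l for all q ∈ ℕ (or equality T^q(l) = l occurs only for even q), then d*(l) := lim_{ε→0+} d(l+ε) equals d(l); whereas if T^q(l) = l for some odd q (minimal), so that d(l) = (l_1 ⋯ l_q)^ω, then d*(l) = l_1 ⋯ l_{q-1} (l_q - 1) followed by d*(r). -/
lemma negBetaT_iter_succ (β l x : ℝ) (i : ℕ) :
    (negBetaT β l)^[i+1] x = negBetaT β l ((negBetaT β l)^[i] x) :=
  Function.iterate_succ_apply' _ _ _

lemma negBetaT_fract (β l x : ℝ) :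
    negBetaT β l x = l + Int.fract (-β * x - l) := by
  simp only [negBetaT, Int.fract]; ring

/-- Step lemma: if the iterate at step `i` is affine in `ε` near `0⁺`, and (in case `i` is
even) `T^{i+1} l ≠ l`, then the digit at `i` is locally the digit of `l`, and the iterate
at `i+1` is affine. -/
lemma negBeta_step (β l : ℝ) (hβ : 1 < β) (i : ℕ)
    (h : ∃ ε₀ > 0, ∀ ε : ℝ, 0 < ε → ε < ε₀ →
      (negBetaT β l)^[i] (l + ε) = (negBetaT β l)^[i] l + (-β)^i * ε)
    (hne : Even i → (negBetaT β l)^[i+1] l ≠ l) :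
    ∃ ε₀ > 0, ∀ ε : ℝ, 0 < ε → ε < ε₀ →
      negBetaDigit β l (l + ε) i = negBetaDigit β l l i ∧
      (negBetaT β l)^[i+1] (l + ε) = (negBetaT β l)^[i+1] l + (-β)^(i+1) * ε := by
  obtain ⟨ε₀, hε₀, hit⟩ := h
  set c : ℝ := -β * ((negBetaT β l)^[i] l) - l with hc
  set gap : ℝ := if Even i then Int.fract c else 1 - Int.fract c with hgap
  have hβpos : (0:ℝ) < β := lt_trans one_pos hβ
  have hpow : (0:ℝ) < β ^ (i+1) := pow_pos hβpos _
  have hfrac : Int.fract c = (negBetaT β l)^[i+1] l - l := by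
    rw [negBetaT_iter_succ, negBetaT_fract]; ring
  have hgappos : 0 < gap := by
    rcases Nat.even_or_odd i with he | ho
    · simp only [hgap, if_pos he]
      rcases lt_or_eq_of_le (Int.fract_nonneg c) with h1 | h1
      · exact h1
      · exact absurd (by linarith [hfrac ▸ h1.symm] : (negBetaT β l)^[i+1] l = l) (hne he)
    · simp only [hgap, if_neg (Nat.not_even_iff_odd.mpr ho)]
      linarith [Int.fract_lt_one c]
  refine ⟨min ε₀ (gap / β^(i+1)), lt_min hε₀ (div_pos hgappos hpow), ?_⟩
  intro ε hε hε'
  have h1 := hit ε hε (lt_of_lt_of_le hε' (min_le_left _ _))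
  have h2 : β^(i+1) * ε < gap := by
    have h3 := lt_of_lt_of_le hε' (min_le_right _ _)
    calc β^(i+1) * ε < β^(i+1) * (gap / β^(i+1)) := (mul_lt_mul_iff_right₀ hpow).mpr h3
    _ = gap := by field_simp
  have hδ : -β * ((negBetaT β l)^[i] (l + ε)) - l = c + (-β)^(i+1) * ε := by
    rw [h1]; ring
  have hfl : ⌊c + (-β)^(i+1) * ε⌋ = ⌊c⌋ := by
    have hεpos : 0 < β^(i+1) * ε := mul_pos hpow hε
    rcases Nat.even_or_odd i with he | ho
    · have hp : (-β)^(i+1) = -(β^(i+1)) := Odd.neg_pow (Even.add_one he) β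
      have hg : gap = Int.fract c := if_pos he
      rw [hg] at h2
      have hfr : Int.fract c = c - ⌊c⌋ := rfl
      rw [Int.floor_eq_iff]
      constructor
      · push_cast; nlinarith [hfr ▸ h2]
      · push_cast; nlinarith [Int.lt_floor_add_one c]
    · have hp : (-β)^(i+1) = β^(i+1) := Even.neg_pow (Odd.add_one ho) β
      have hg : gap = 1 - Int.fract c := if_neg (Nat.not_even_iff_odd.mpr ho)
      rw [hg] at h2
      have hfr : Int.fract c = c - ⌊c⌋ := rfl
      rw [Int.floor_eq_iff]
      constructor
      · push_cast; nlinarith [Int.floor_le c]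
      · push_cast; nlinarith [hfr ▸ h2]
  constructor
  · show ⌊-β * ((negBetaT β l)^[i] (l+ε)) - l⌋ = ⌊-β * ((negBetaT β l)^[i] l) - l⌋
    rw [hδ, hfl]
  · rw [negBetaT_iter_succ, negBetaT_iter_succ]
    show -β * ((negBetaT β l)^[i] (l+ε)) - ⌊-β * ((negBetaT β l)^[i] (l+ε)) - l⌋ = _
    rw [show (⌊-β * ((negBetaT β l)^[i] (l+ε)) - l⌋ : ℤ) = ⌊c⌋ by rw [hδ, hfl], h1]
    show _ = -β * ((negBetaT β l)^[i] l) - ⌊-β * ((negBetaT β l)^[i] l) - l⌋ + _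
    rw [← hc]; ring

/-- Step lemma at a step where `T^{i+1} l = l` with `i` even: the digit drops by 1 and the
orbit jumps to just below `l+1`. -/
lemma negBeta_step2 (β l : ℝ) (hβ : 1 < β) (i : ℕ)
    (h : ∃ ε₀ > 0, ∀ ε : ℝ, 0 < ε → ε < ε₀ →
      (negBetaT β l)^[i] (l + ε) = (negBetaT β l)^[i] l + (-β)^i * ε)
    (heq : (negBetaT β l)^[i+1] l = l) (he : Even i) :
    ∃ ε₀ > 0, ∀ ε : ℝ, 0 < ε → ε < ε₀ →
      negBetaDigit β l (l + ε) i = negBetaDigit β l l i - 1 ∧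
      (negBetaT β l)^[i+1] (l + ε) = l + 1 - β^(i+1) * ε := by
  obtain ⟨ε₀, hε₀, hit⟩ := h
  set c : ℝ := -β * ((negBetaT β l)^[i] l) - l with hc
  have hβpos : (0:ℝ) < β := lt_trans one_pos hβ
  have hpow : (0:ℝ) < β ^ (i+1) := pow_pos hβpos _
  have hfrac : Int.fract c = (negBetaT β l)^[i+1] l - l := by
    rw [negBetaT_iter_succ, negBetaT_fract]; ring
  have hc0 : c = (⌊c⌋ : ℝ) := by
    have : Int.fract c = 0 := by rw [hfrac, heq]; ring
    have hfr : Int.fract c = c - ⌊c⌋ := rfl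
    linarith [hfr ▸ this]
  refine ⟨min ε₀ (1 / β^(i+1)), lt_min hε₀ (div_pos one_pos hpow), ?_⟩
  intro ε hε hε'
  have h1 := hit ε hε (lt_of_lt_of_le hε' (min_le_left _ _))
  have h2 : β^(i+1) * ε < 1 := by
    have h3 := lt_of_lt_of_le hε' (min_le_right _ _)
    calc β^(i+1) * ε < β^(i+1) * (1 / β^(i+1)) := (mul_lt_mul_iff_right₀ hpow).mpr h3
    _ = 1 := by field_simp
  have hεpos : 0 < β^(i+1) * ε := mul_pos hpow hε
  have hp : (-β)^(i+1) = -(β^(i+1)) := Odd.neg_pow (Even.add_one he) β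
  have hδ : -β * ((negBetaT β l)^[i] (l + ε)) - l = c + (-β)^(i+1) * ε := by
    rw [h1]; ring
  have hfl : ⌊c + (-β)^(i+1) * ε⌋ = ⌊c⌋ - 1 := by
    rw [hp, Int.floor_eq_iff]
    constructor
    · push_cast; nlinarith [hc0]
    · push_cast; nlinarith [hc0]
  constructor
  · show ⌊-β * ((negBetaT β l)^[i] (l+ε)) - l⌋ = ⌊-β * ((negBetaT β l)^[i] l) - l⌋ - 1
    rw [hδ, hfl]
  · rw [negBetaT_iter_succ]
    show -β * ((negBetaT β l)^[i] (l+ε)) - ⌊-β * ((negBetaT β l)^[i] (l+ε)) - l⌋ = _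
    rw [show (⌊-β * ((negBetaT β l)^[i] (l+ε)) - l⌋ : ℤ) = ⌊c⌋ - 1 by rw [hδ, hfl], h1]
    push_cast
    rw [Even.neg_pow he]
    linear_combination hc0 - hc + ε * pow_succ β i

/-- The iterate is affine in `ε` near `0⁺` as long as no odd-time return to `l` occurred. -/
lemma negBeta_iter (β l : ℝ) (hβ : 1 < β) :
    ∀ i : ℕ, (∀ j : ℕ, j < i → Even j → (negBetaT β l)^[j+1] l ≠ l) →
    ∃ ε₀ > 0, ∀ ε : ℝ, 0 < ε → ε < ε₀ →
      (negBetaT β l)^[i] (l + ε) = (negBetaT β l)^[i] l + (-β)^i * ε := by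
  intro i
  induction i with
  | zero => exact fun _ => ⟨1, one_pos, fun ε _ _ => by simp⟩
  | succ n ih =>
    intro h
    obtain ⟨ε₀, hε₀, hs⟩ := negBeta_step β l hβ n (ih fun j hj => h j (by omega))
      (fun he => h n (by omega) he)
    exact ⟨ε₀, hε₀, fun ε h1 h2 => (hs ε h1 h2).2⟩

theorem stmt_16 (β l : ℝ) (hβ : 1 < β) (hl₁ : -1 < l) (hl₂ : l ≤ 0)
    (dstarl dstarr : ℕ → ℤ)
    -- `dstarl = lim_{ε→0+} d(l+ε)`
    (hdl : ∀ i : ℕ, ∃ ε₀ > 0, ∀ ε : ℝ, 0 < ε → ε < ε₀ →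
      negBetaDigit β l (l + ε) i = dstarl i)
    -- `dstarr = lim_{ε→0+} d(l+1-ε)`
    (hdr : ∀ i : ℕ, ∃ ε₀ > 0, ∀ ε : ℝ, 0 < ε → ε < ε₀ →
      negBetaDigit β l (l + 1 - ε) i = dstarr i) :
    -- if `T^q(l) = l` never happens for `q ≥ 1`, or happens only for even `q`,
    -- then `d*(l) = d(l)`
    ((∀ q : ℕ, 0 < q → (negBetaT β l)^[q] l = l → Even q) →
      dstarl = negBetaDigit β l l) ∧
    -- if the minimal `q ≥ 1` with `T^q(l) = l` is odd, then
    -- `d*(l) = l_1 ⋯ l_{q-1} (l_q - 1) d*(r)`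
    (∀ q : ℕ, 0 < q → Odd q → (negBetaT β l)^[q] l = l →
      (∀ p : ℕ, 0 < p → (negBetaT β l)^[p] l = l → q ≤ p) →
      (∀ k < q - 1, dstarl k = negBetaDigit β l l k) ∧
      dstarl (q - 1) = negBetaDigit β l l (q - 1) - 1 ∧
      (∀ k : ℕ, dstarl (q + k) = dstarr k)) := by
  have hβpos : (0:ℝ) < β := lt_trans one_pos hβ
  -- pinning lemma: if the digit is locally constant `= v` near `0⁺`, then `dstarl i = v`
  have pin : ∀ i : ℕ, ∀ v : ℤ,
      (∃ ε₀ > 0, ∀ ε : ℝ, 0 < ε → ε < ε₀ → negBetaDigit β l (l + ε) i = v) →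
      dstarl i = v := by
    rintro i v ⟨ε₁, hε₁, h1⟩
    obtain ⟨ε₂, hε₂, h2⟩ := hdl i
    have hm : 0 < min ε₁ ε₂ / 2 := by positivity
    have e1 := h1 (min ε₁ ε₂ / 2) hm
      (by have := min_le_left ε₁ ε₂; linarith)
    have e2 := h2 (min ε₁ ε₂ / 2) hm
      (by have := min_le_right ε₁ ε₂; linarith)
    rw [← e2, e1]
  constructor
  · -- first part
    intro hyp
    funext i
    apply pin
    have hcond : ∀ j : ℕ, Even j → (negBetaT β l)^[j+1] l ≠ l := by
      intro j hj habs
      have := hyp (j+1) (Nat.succ_pos j) habs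
      rw [Nat.even_add_one] at this
      exact this hj
    obtain ⟨ε₀, hε₀, hs⟩ := negBeta_step β l hβ i
      (negBeta_iter β l hβ i (fun j _ => hcond j)) (hcond i)
    exact ⟨ε₀, hε₀, fun ε h1 h2 => (hs ε h1 h2).1⟩
  · -- second part
    intro q hq hodd hfix hmin
    have hqi : q - 1 + 1 = q := Nat.succ_pred_eq_of_pos hq
    set i := q - 1 with hi
    have hei : Even i := by
      rcases Nat.even_or_odd i with he | ho
      · exact he
      · exfalso
        have : Even q := by rw [← hqi]; exact Odd.add_one ho
        exact (Nat.not_even_iff_odd.mpr hodd) this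
    have hcond : ∀ j : ℕ, j + 1 < q → (negBetaT β l)^[j+1] l ≠ l := by
      intro j hj habs
      exact absurd (hmin (j+1) (Nat.succ_pos j) habs) (by omega)
    refine ⟨?_, ?_, ?_⟩
    · -- digits before q-1 agree
      intro k hk
      apply pin
      obtain ⟨ε₀, hε₀, hs⟩ := negBeta_step β l hβ k
        (negBeta_iter β l hβ k (fun j hj _ => hcond j (by omega)))
        (fun _ => hcond k (by omega))
      exact ⟨ε₀, hε₀, fun ε h1 h2 => (hs ε h1 h2).1⟩
    · -- digit at q-1 drops by one
      apply pin
      obtain ⟨ε₀, hε₀, hs⟩ := negBeta_step2 β l hβ i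
        (negBeta_iter β l hβ i (fun j hj _ => hcond j (by omega)))
        (by rw [hqi]; exact hfix) hei
      exact ⟨ε₀, hε₀, fun ε h1 h2 => (hs ε h1 h2).1⟩
    · -- tail digits equal `dstarr`
      intro k
      apply pin
      obtain ⟨ε₀, hε₀, hs⟩ := negBeta_step2 β l hβ i
        (negBeta_iter β l hβ i (fun j hj _ => hcond j (by omega)))
        (by rw [hqi]; exact hfix) hei
      obtain ⟨ε₂, hε₂, h2⟩ := hdr k
      have hpow : (0:ℝ) < β ^ (i+1) := pow_pos hβpos _
      refine ⟨min ε₀ (ε₂ / β^(i+1)), lt_min hε₀ (div_pos hε₂ hpow), ?_⟩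
      intro ε h1 h2'
      have hq1 := (hs ε h1 (lt_of_lt_of_le h2' (min_le_left _ _))).2
      have hε2 : β^(i+1) * ε < ε₂ := by
        have h3 := lt_of_lt_of_le h2' (min_le_right _ _)
        calc β^(i+1) * ε < β^(i+1) * (ε₂ / β^(i+1)) := (mul_lt_mul_iff_right₀ hpow).mpr h3
        _ = ε₂ := by field_simp
      have hεp : 0 < β^(i+1) * ε := mul_pos hpow h1
      have key : negBetaDigit β l (l + ε) (q + k) =
          negBetaDigit β l ((negBetaT β l)^[q] (l + ε)) k := by
        unfold negBetaDigit
        rw [Nat.add_comm q k, Function.iterate_add_apply]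
      rw [key, ← hqi, hq1,
        show l + 1 - β ^ (i + 1) * ε = l + 1 - (β ^ (i+1) * ε) by ring]
      exact h2 (β^(i+1) * ε) hεp hε2
end
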